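/- For all (a₁,a₂) ∈ ℝ², S_ρ(a₁,a₂)² = K(X₁(a₁,a₂), X₂(a₁,a₂)). -/
import Mathlib

open Real

noncomputable section

/-- `X₁` for `C₂`. -/
def X1 (a₁ a₂ : ℝ) : ℝ :=
  2 * (Real.cos (2 * π * a₁) + Real.cos (2 * π * (a₁ - a₂)))

/-- `X₂` for `C₂`. -/
def X2 (a₁ a₂ : ℝ) : ℝ :=
  2 * (Real.cos (2 * π * a₂) + Real.cos (2 * π * (2 * a₁ - a₂)))

/-- The weight polynomial `K` of `C₂`. -/
def K (y₁ y₂ : ℝ) : ℝ :=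
  (y₁ ^ 2 - 4 * y₂) * ((y₂ + 4) ^ 2 - 4 * y₁ ^ 2)

/-- The lowest antisymmetric orbit function `S_ρ` of `C₂`. -/
def Srho (a₁ a₂ : ℝ) : ℝ :=
  2 * (Real.cos (2 * π * (a₁ + a₂)) - Real.cos (2 * π * (-a₁ + 2 * a₂)) -
    Real.cos (2 * π * (3 * a₁ - a₂)) + Real.cos (2 * π * (3 * a₁ - 2 * a₂)))

/-- For `C₂`, `S_ρ² = K(X₁, X₂)` pointwise. -/
theorem Srho_sq_eq_K_C2 (a₁ a₂ : ℝ) :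
    (Srho a₁ a₂) ^ 2 = K (X1 a₁ a₂) (X2 a₁ a₂) := by
  unfold Srho K X1 X2
  have e1 : 2 * π * (a₁ + a₂) = 2*π*a₁ + 2*π*a₂ := by ring
  have e2 : 2 * π * (-a₁ + 2 * a₂) = (2*π*a₂ + 2*π*a₂) - 2*π*a₁ := by ring
  have e3 : 2 * π * (3 * a₁ - a₂) = (2*π*a₁ + 2*π*a₁ + 2*π*a₁) - 2*π*a₂ := by ring
  have e4 : 2 * π * (3 * a₁ - 2 * a₂) = (2*π*a₁ + 2*π*a₁ + 2*π*a₁) - (2*π*a₂ + 2*π*a₂) := by ring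
  have e5 : 2 * π * (a₁ - a₂) = 2*π*a₁ - 2*π*a₂ := by ring
  have e6 : 2 * π * (2 * a₁ - a₂) = (2*π*a₁ + 2*π*a₁) - 2*π*a₂ := by ring
  rw [e1, e2, e3, e4, e5, e6]
  simp only [Real.cos_add, Real.cos_sub, Real.sin_add, Real.sin_sub]
  set c1 := Real.cos (2*π*a₁)
  set s1 := Real.sin (2*π*a₁)
  set c2 := Real.cos (2*π*a₂)
  set s2 := Real.sin (2*π*a₂)
  have hs1 : s1^2 + c1^2 = 1 := Real.sin_sq_add_cos_sq _
  have hs2 : s2^2 + c2^2 = 1 := Real.sin_sq_add_cos_sq _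
  linear_combination ((-64:ℝ)*s2^2 + (64:ℝ)*s2^4 + (-128:ℝ)*c2 + (-128:ℝ)*c2^2 + (64:ℝ)*c2^2*s2^2 + (-32:ℝ)*c2^3 + (-4:ℝ)*s1^2*s2^2 + (64:ℝ)*s1^2*s2^4 + (176:ℝ)*s1^2*c2*s2^2 + (128:ℝ)*s1^2*c2^2 + (64:ℝ)*s1^2*c2^2*s2^2 + (64:ℝ)*s1^2*c2^3 + (4:ℝ)*s1^4*s2^2 + (-16:ℝ)*s1^4*c2*s2^2 + (-32:ℝ)*s1^4*c2^3 + (-120:ℝ)*c1*s1*s2^3 + (-120:ℝ)*c1*s1*c2*s2 + (144:ℝ)*c1*s1*c2*s2^3 + (104:ℝ)*c1*s1*c2^2*s2 + (144:ℝ)*c1*s1*c2^3*s2 + (24:ℝ)*c1*s1^3*s2^3 + (24:ℝ)*c1*s1^3*c2*s2 + (16:ℝ)*c1*s1^3*c2*s2^3 + (88:ℝ)*c1*s1^3*c2^2*s2 + (16:ℝ)*c1*s1^3*c2^3*s2 + (128:ℝ)*c1^2*s2^2 + (-68:ℝ)*c1^2*s2^4 + (192:ℝ)*c1^2*c2 +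 (-136:ℝ)*c1^2*c2*s2^2 + (76:ℝ)*c1^2*c2^2 + (8:ℝ)*c1^2*c2^2*s2^2 + (-24:ℝ)*c1^2*c2^3 + (76:ℝ)*c1^2*c2^4 + (-28:ℝ)*c1^2*s1^2*s2^2 + (-28:ℝ)*c1^2*s1^2*s2^4 + (-72:ℝ)*c1^2*s1^2*c2*s2^2 + (20:ℝ)*c1^2*s1^2*c2^2 + (-8:ℝ)*c1^2*s1^2*c2^2*s2^2 + (24:ℝ)*c1^2*s1^2*c2^3 + (20:ℝ)*c1^2*s1^2*c2^4 + (24:ℝ)*c1^3*s1*s2^3 + (-40:ℝ)*c1^3*s1*c2*s2 + (-48:ℝ)*c1^3*s1*c2*s2^3 + (-40:ℝ)*c1^3*s1*c2^2*s2 + (-48:ℝ)*c1^3*s1*c2^3*s2 + (4:ℝ)*c1^4*s2^4 + (8:ℝ)*c1^4*c2*s2^2 + (-12:ℝ)*c1^4*c2^2 + (-8:ℝ)*c1^4*c2^2*s2^2 + (-8:ℝ)*c1^4*c2^3 + (-12:ℝ)*c1^4*c2^4) * hs1 + ((64:ℝ)*s2^2 + (-128:ℝ)*c1*s1*s2 +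 (128:ℝ)*c1*s1*c2*s2 + (64:ℝ)*c1^2 + (-128:ℝ)*c1^2*s2^2 + (-128:ℝ)*c1^2*c2 + (64:ℝ)*c1^2*c2^2 + (128:ℝ)*c1^3*s1*s2 + (-128:ℝ)*c1^3*s1*c2*s2 + (-64:ℝ)*c1^4 + (64:ℝ)*c1^4*s2^2 + (128:ℝ)*c1^4*c2 + (-64:ℝ)*c1^4*c2^2) * hs2

end
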